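/- Let g(z) = exp(iα)·φ_w(z) with α ∈ ℝ and w ∈ 𝔻 be a holomorphic automorphism of 𝔻. For every continuous compactly supported F : 𝔻 × 𝔻 → ℂ, every x ∈ 𝔻, every λ ∈ ℝ and every b on the unit circle, W_{F∘g}(x; λ, b) = W_F(g(x); λ, g(b)), where (F∘g)(x,y) := F(g(x), g(y)). -/

import Mathlib

open MeasureTheory

/-- The open unit disc in the complex plane. -/
def Disc : Set ℂ := {z : ℂ | ‖z‖ < 1}

/-- The geodesic symmetry `φ_a(z) = (a - z)/(1 - conj(a)·z)`. -/
noncomputable def phi (a z : ℂ) : ℂ := (a - z) / (1 - (starRingEnd ℂ) a * z)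

/-- The hyperbolic measure `dμ(z) = (1 - |z|²)⁻² dA(z)` on the unit disc. -/
noncomputable def hypMeasure : Measure ℂ :=
  (volume.restrict Disc).withDensity fun z => ENNReal.ofReal ((1 - ‖z‖ ^ 2)⁻¹ ^ 2)

/-- The plane wave `e_{λ,b}(z) = ((1 - |z|²)/|z - b|²)^{(1+iλ)/2}`. -/
noncomputable def pw (lam : ℝ) (b z : ℂ) : ℂ :=
  (((1 - ‖z‖ ^ 2) / ‖z - b‖ ^ 2 : ℝ) : ℂ) ^
    ((1 + Complex.I * (lam : ℂ)) / 2)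

/-- The geodesic symmetry at the point `x`:  `s_x(y) = φ_x(-φ_x(y))`. -/
noncomputable def geoSym (x y : ℂ) : ℂ := phi x (-(phi x y))

/-- The Wigner transform
`W_F(x;λ,b) = |e_{λ,b}(x)|⁻² ∫ e_{λ,b}(y)·e_{-λ,b}(s_x(y))·F(s_x(y),y)·J(x,y) dμ(y)`. -/
noncomputable def wigner (J : ℂ → ℂ → ℝ) (F : ℂ × ℂ → ℂ) (x : ℂ) (lam : ℝ) (b : ℂ) : ℂ :=
  ((‖pw lam b x‖ ^ 2 : ℝ) : ℂ)⁻¹ *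
    ∫ y, pw lam b y * pw (-lam) b (geoSym x y) * F (geoSym x y, y) * (J x y : ℂ) ∂hypMeasure



-- ## Auxiliary development

open Complex Metric
open scoped ENNReal NNReal

local notation "conj'" => starRingEnd ℂ

lemma key0 (a z : ℂ) : normSq (1 - conj' a * z) - normSq (a - z)
    = (1 - normSq a) * (1 - normSq z) := by
  simp [normSq_apply]; ring

lemma one_sub_ne {u : ℂ} (h : ‖u‖ < 1) : 1 - u ≠ 0 := by
  intro h0
  have : u = 1 := by linear_combination -h0
  simp [this] at h

lemma denom_ne {a z : ℂ} (ha : ‖a‖ < 1) (hz : ‖z‖ ≤ 1) :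
    1 - conj' a * z ≠ 0 := by
  apply one_sub_ne
  rw [norm_mul, Complex.norm_conj]
  nlinarith [norm_nonneg a, norm_nonneg z]

lemma phi_mem {a z : ℂ} (ha : ‖a‖ < 1) (hz : ‖z‖ < 1) :
    ‖phi a z‖ < 1 := by
  have h1 : normSq (a - z) < normSq (1 - conj' a * z) := by
    have := key0 a z
    have h2 : 0 < (1 - normSq a) * (1 - normSq z) := by
      have ha' := Complex.sq_norm a; have hz' := Complex.sq_norm z
      have : normSq a < 1 := by nlinarith [norm_nonneg a]
      have : normSq z < 1 := by nlinarith [norm_nonneg z]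
      nlinarith
    linarith
  have h3 : 1 - conj' a * z ≠ 0 := denom_ne ha hz.le
  rw [phi, norm_div, div_lt_one (norm_pos_iff.mpr h3)]
  have := Complex.sq_norm (a - z); have := Complex.sq_norm (1 - conj' a * z)
  nlinarith [norm_nonneg (a - z), norm_nonneg (1 - conj' a * z)]

lemma phi_mem_disc {a z : ℂ} (ha : a ∈ Disc) (hz : z ∈ Disc) : phi a z ∈ Disc :=
  phi_mem ha hz

lemma phi_denom {a z : ℂ} (h : 1 - conj' a * z ≠ 0) :
    1 - conj' a * phi a z = (1 - conj' a * a) / (1 - conj' a * z) := by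
  rw [phi]; field_simp; ring

lemma normSq_lt_one {a : ℂ} (ha : ‖a‖ < 1) : normSq a < 1 := by
  have := Complex.sq_norm a; nlinarith [norm_nonneg a]

lemma diag_ne {a : ℂ} (ha : ‖a‖ < 1) : 1 - conj' a * a ≠ 0 := by
  rw [← Complex.normSq_eq_conj_mul_self]
  intro h
  have h1 : (normSq a : ℂ) = 1 := by linear_combination -h
  have h2 : normSq a = 1 := by exact_mod_cast h1
  have := normSq_lt_one ha
  linarith

lemma phi_invol {a z : ℂ} (ha : ‖a‖ < 1) (hz : ‖z‖ ≤ 1) :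
    phi a (phi a z) = z := by
  have h1 : 1 - conj' a * z ≠ 0 := denom_ne ha hz
  have h2 : 1 - conj' a * a ≠ 0 := diag_ne ha
  have h1' : 1 - z * conj' a ≠ 0 := by rwa [mul_comm]
  have h2' : 1 - a * conj' a ≠ 0 := by rwa [mul_comm]
  rw [phi, phi_denom h1, phi]
  field_simp
  ring

lemma phi_inj {a z z' : ℂ} (ha : ‖a‖ < 1) (hz : ‖z‖ ≤ 1)
    (hz' : ‖z'‖ ≤ 1) (h : phi a z = phi a z') : z = z' := by
  rw [← phi_invol ha hz, h, phi_invol ha hz']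

section

variable {e w a z : ℂ}

lemma phi_rot (he : conj' e * e = 1) (a z : ℂ) :
    phi (e * a) (e * z) = e * phi a z := by
  have h : 1 - conj' (e * a) * (e * z) = 1 - conj' a * z := by
    rw [map_mul]; linear_combination (-(conj' a) * z) * he
  rw [phi, phi, h, show e * a - e * z = e * (a - z) by ring, mul_div_assoc]

lemma phi_sub (h1 : 1 - conj' w * a ≠ 0) (h2 : 1 - conj' w * z ≠ 0) :
    phi w a - phi w z = ((1 - conj' w * w) * (z - a)) / ((1 - conj' w * a) * (1 - conj' w * z)) := by
  have h1' : 1 - a * conj' w ≠ 0 := by rwa [mul_comm]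
  rw [phi, phi]; field_simp; ring

lemma phi_denom2 (h1 : 1 - w * conj' a ≠ 0) (h2 : 1 - conj' w * z ≠ 0) :
    1 - conj' (phi w a) * phi w z
      = ((1 - conj' w * w) * (1 - conj' a * z)) / ((1 - w * conj' a) * (1 - conj' w * z)) := by
  have h1' : 1 - conj' a * w ≠ 0 := by rwa [mul_comm]
  simp only [phi, map_div₀, map_sub, map_mul, map_one, Complex.conj_conj]
  field_simp
  ring

lemma abs_conj' (u : ℂ) : ‖conj' u‖ = ‖u‖ := Complex.norm_conj u

lemma phi_phi (hw : ‖w‖ < 1) (ha : ‖a‖ < 1) (hz : ‖z‖ < 1) :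
    phi (phi w a) (phi w z) = (-(1 - conj' a * w) / (1 - conj' w * a)) * phi a z := by
  have h1 : 1 - conj' w * a ≠ 0 := denom_ne hw ha.le
  have h2 : 1 - conj' w * z ≠ 0 := denom_ne hw hz.le
  have h1' : 1 - w * conj' a ≠ 0 := by
    intro h
    apply h1
    have := congrArg conj' h
    simpa using this
  have h3 : 1 - conj' a * z ≠ 0 := denom_ne ha hz.le
  have hww : 1 - conj' w * w ≠ 0 := diag_ne hw
  rw [phi, phi_denom2 h1' h2]
  rw [show phi w a - phi w z
      = ((1 - conj' w * w) * (z - a)) / ((1 - conj' w * a) * (1 - conj' w * z)) from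
    phi_sub h1 h2]
  rw [div_div_div_eq]
  simp only [phi]
  field_simp
  ring

end

section

variable {e w x z : ℂ}

lemma unit_conj_mul (he : ‖e‖ = 1) : conj' e * e = 1 := by
  rw [← Complex.normSq_eq_conj_mul_self]
  have : normSq e = 1 := by rw [← Complex.sq_norm, he]; norm_num
  rw [this]; norm_num

lemma geoSym_mem {x z : ℂ} (hx : ‖x‖ < 1) (hz : ‖z‖ < 1) :
    ‖geoSym x z‖ < 1 := by
  apply phi_mem hx
  rw [norm_neg]
  exact phi_mem hx hz

lemma phi_g (he : ‖e‖ = 1) (hw : ‖w‖ < 1) (ha : ‖x‖ < 1)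
    (hz : ‖z‖ < 1) :
    phi (e * phi w x) (e * phi w z)
      = (e * (-(1 - conj' x * w) / (1 - conj' w * x))) * phi x z := by
  rw [phi_rot (unit_conj_mul he), phi_phi hw ha hz, mul_assoc]

lemma geoSym_g (he : ‖e‖ = 1) (hw : ‖w‖ < 1) (hx : ‖x‖ < 1)
    (hz : ‖z‖ < 1) :
    geoSym (e * phi w x) (e * phi w z) = e * phi w (geoSym x z) := by
  set U : ℂ := e * (-(1 - conj' x * w) / (1 - conj' w * x)) with hU
  have hc : ‖e * phi w x‖ < 1 := by
    rw [norm_mul, he, one_mul]; exact phi_mem hw hx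
  have hgz : ‖e * phi w z‖ < 1 := by
    rw [norm_mul, he, one_mul]; exact phi_mem hw hz
  have hs : ‖geoSym x z‖ < 1 := geoSym_mem hx hz
  have hR : ‖e * phi w (geoSym x z)‖ < 1 := by
    rw [norm_mul, he, one_mul]; exact phi_mem hw hs
  have h1 : phi (e * phi w x) (e * phi w (geoSym x z)) = U * (-(phi x z)) := by
    rw [phi_g he hw hx hs, geoSym, phi_invol hx (by rw [norm_neg]; exact (phi_mem hx hz).le)]
  have h2 : phi (e * phi w x) (e * phi w z) = U * phi x z := phi_g he hw hx hz
  have hL : ‖geoSym (e * phi w x) (e * phi w z)‖ < 1 := geoSym_mem hc hgz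
  apply phi_inj hc hL.le hR.le
  rw [geoSym, phi_invol hc (by rw [norm_neg]; exact (phi_mem hc hgz).le), h2, h1]
  ring

end

section

lemma mid_eq {x y m : ℂ} (hx : ‖x‖ < 1) (hy : ‖y‖ < 1)
    (hm : ‖m‖ < 1) (h : phi m x = -(phi m y)) :
    m * (2 * (1 - (x * y) * conj' (x * y)))
      = (1 + conj' m * m) * ((x + y) - conj' (x + y) * (x * y)) := by
  have d1 : 1 - conj' m * x ≠ 0 := denom_ne hm hx.le
  have d2 : 1 - conj' m * y ≠ 0 := denom_ne hm hy.le
  rw [phi, phi] at h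
  have E : (m - x) * (1 - conj' m * y) + (m - y) * (1 - conj' m * x) = 0 := by
    have d1' : 1 - x * conj' m ≠ 0 := by rwa [mul_comm]
    field_simp at h
    linear_combination h
  have Ec : (conj' m - conj' x) * (1 - m * conj' y) + (conj' m - conj' y) * (1 - m * conj' x)
      = 0 := by
    have := congrArg conj' E
    simpa [map_add, map_sub, map_mul, map_one] using this
  simp only [map_add, map_mul]
  linear_combination E - (x * y) * Ec

lemma real_aux {t t' r : ℝ} (ht0 : 0 ≤ t) (ht'0 : 0 ≤ t') (ht : t < 1) (ht' : t' < 1)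
    (h1 : t = (1 + t ^ 2) * r) (h2 : t' = (1 + t' ^ 2) * r) : t = t' := by
  by_contra hne
  have key : t * (1 + t' ^ 2) = t' * (1 + t ^ 2) := by linear_combination (1 + t' ^ 2) * h1 - (1 + t ^ 2) * h2
  have h0 : (t - t') * (1 - t * t') = 0 := by linear_combination key
  rcases mul_eq_zero.1 h0 with h3 | h3
  · exact hne (by linarith)
  · nlinarith

lemma mid_unique {x y m m' : ℂ} (hx : ‖x‖ < 1) (hy : ‖y‖ < 1)
    (hm : ‖m‖ < 1) (hm' : ‖m'‖ < 1)
    (h : phi m x = -(phi m y)) (h' : phi m' x = -(phi m' y)) : m = m' := by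
  have hpabs : ‖x * y‖ < 1 := by
    rw [norm_mul]
    nlinarith [norm_nonneg x, norm_nonneg y]
  have hd : (0:ℝ) < 2 * (1 - normSq (x * y)) := by
    have := normSq_lt_one hpabs; linarith
  have hdne : ((2 * (1 - normSq (x * y)) : ℝ) : ℂ) ≠ 0 := by exact_mod_cast hd.ne'
  obtain ⟨q, hq⟩ : ∃ q : ℂ,
      q = ((x + y) - conj' (x + y) * (x * y)) / ((2 * (1 - normSq (x * y)) : ℝ) : ℂ) := ⟨_, rfl⟩
  have key : ∀ n : ℂ, ‖n‖ < 1 → phi n x = -(phi n y) →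
      n = ((1 + normSq n : ℝ) : ℂ) * q := by
    intro n hn hcond
    have hmain := mid_eq hx hy hn hcond
    have hpc : ((normSq (x * y) : ℝ) : ℂ) = (x * y) * conj' (x * y) := (Complex.mul_conj _).symm
    have hnc : ((normSq n : ℝ) : ℂ) = conj' n * n := by
      rw [Complex.normSq_eq_conj_mul_self]
    rw [hq, mul_div_assoc', eq_div_iff hdne]
    rw [show ((2 * (1 - normSq (x * y)) : ℝ) : ℂ) = 2 * (1 - (x * y) * conj' (x * y)) by
      rw [← hpc]; push_cast; ring]
    rw [show ((1 + normSq n : ℝ) : ℂ) = 1 + conj' n * n by rw [← hnc]; push_cast; ring]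
    linear_combination hmain
  have e1 := key m hm h
  have e2 := key m' hm' h'
  have t1 : ‖m‖ = (1 + ‖m‖ ^ 2) * ‖q‖ := by
    conv_lhs => rw [e1]
    rw [norm_mul, Complex.norm_real, Real.norm_eq_abs, abs_of_pos (by nlinarith [normSq_nonneg m]),
      ← Complex.sq_norm]
  have t2 : ‖m'‖ = (1 + ‖m'‖ ^ 2) * ‖q‖ := by
    conv_lhs => rw [e2]
    rw [norm_mul, Complex.norm_real, Real.norm_eq_abs, abs_of_pos (by nlinarith [normSq_nonneg m']),
      ← Complex.sq_norm]
  have hteq : ‖m‖ = ‖m'‖ :=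
    real_aux (norm_nonneg m) (norm_nonneg m') hm hm' t1 t2
  have hns : normSq m = normSq m' := by
    rw [← Complex.sq_norm, ← Complex.sq_norm, hteq]
  rw [e1, e2, hns]

end

lemma one_sub_normSq_pos {w : ℂ} (hw : ‖w‖ < 1) : 0 < 1 - normSq w := by
  have := normSq_lt_one hw; linarith

lemma one_sub_conj_self (w : ℂ) : (1 : ℂ) - conj' w * w = ((1 - normSq w : ℝ) : ℂ) := by
  rw [Complex.ofReal_sub, Complex.ofReal_one, Complex.normSq_eq_conj_mul_self]

lemma one_sub_abs_sq (z : ℂ) :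
    1 - ‖z‖ ^ 2 = 1 - normSq z := by rw [Complex.sq_norm]

lemma bas_g {e w b z : ℂ} (he : ‖e‖ = 1) (hw : ‖w‖ < 1)
    (hz : ‖z‖ < 1) (hbd : 1 - conj' w * b ≠ 0) (hzb : z ≠ b) :
    (1 - ‖e * phi w z‖ ^ 2) / ‖e * phi w z - e * phi w b‖ ^ 2
      = ((1 - ‖z‖ ^ 2) / ‖z - b‖ ^ 2)
          * (normSq (1 - conj' w * b) / (1 - normSq w)) := by
  have hdz : 1 - conj' w * z ≠ 0 := denom_ne hw hz.le
  have hNz : normSq (1 - conj' w * z) ≠ 0 := by simpa [Complex.normSq_eq_zero] using hdz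
  have hNb : normSq (1 - conj' w * b) ≠ 0 := by simpa [Complex.normSq_eq_zero] using hbd
  have hNzb : normSq (z - b) ≠ 0 := by
    simp [Complex.normSq_eq_zero, sub_eq_zero, hzb]
  have hW : 0 < 1 - normSq w := one_sub_normSq_pos hw
  have h1 : ‖e * phi w z‖ ^ 2 = normSq (w - z) / normSq (1 - conj' w * z) := by
    rw [Complex.sq_norm, Complex.normSq_mul,
      show normSq e = 1 by rw [← Complex.sq_norm, he]; norm_num, one_mul, phi,
      Complex.normSq_div]
  have h2 : ‖e * phi w z - e * phi w b‖ ^ 2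
      = (1 - normSq w) ^ 2 * normSq (z - b)
          / (normSq (1 - conj' w * z) * normSq (1 - conj' w * b)) := by
    rw [show e * phi w z - e * phi w b = e * (phi w z - phi w b) by ring,
      Complex.sq_norm, Complex.normSq_mul,
      show normSq e = 1 by rw [← Complex.sq_norm, he]; norm_num, one_mul,
      phi_sub (denom_ne hw hz.le) hbd, Complex.normSq_div, Complex.normSq_mul,
      Complex.normSq_mul, one_sub_conj_self, Complex.normSq_ofReal,
      show normSq (b - z) = normSq (z - b) by rw [show b - z = -(z-b) by ring, Complex.normSq_neg]]
    ring_nf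
  have h3 : 1 - ‖z‖ ^ 2 = 1 - normSq z := one_sub_abs_sq z
  have h4 : ‖z - b‖ ^ 2 = normSq (z - b) := Complex.sq_norm _
  have h5 : 1 - normSq (w - z) / normSq (1 - conj' w * z)
      = (1 - normSq w) * (1 - normSq z) / normSq (1 - conj' w * z) := by
    have := key0 w z
    rw [eq_div_iff hNz, sub_mul, div_mul_cancel₀ _ hNz]
    linarith
  rw [h1, h2, h5, h3, h4]
  field_simp

lemma re_half (lam : ℝ) : ((1 + Complex.I * (lam : ℂ)) / 2).re = 1 / 2 := by
  simp [Complex.div_re]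

lemma cpow_half_abs_sq {r : ℝ} (hr : 0 < r) (lam : ℝ) :
    ‖((r : ℝ) : ℂ) ^ ((1 + Complex.I * (lam : ℂ)) / 2)‖ ^ 2 = r := by
  rw [Complex.norm_cpow_eq_rpow_re_of_pos hr, re_half]
  rw [← Real.rpow_natCast (r ^ ((1:ℝ)/2)) 2, ← Real.rpow_mul hr.le]
  norm_num

lemma pw_abs_sq {b z : ℂ} (hz : ‖z‖ < 1) (hzb : z ≠ b) (lam : ℝ) :
    ‖pw lam b z‖ ^ 2 = (1 - ‖z‖ ^ 2) / ‖z - b‖ ^ 2 := by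
  have hr : 0 < (1 - ‖z‖ ^ 2) / ‖z - b‖ ^ 2 := by
    apply div_pos (by nlinarith [norm_nonneg z])
    have : ‖z - b‖ > 0 := norm_pos_iff.mpr (sub_ne_zero.2 hzb)
    positivity
  exact cpow_half_abs_sq hr lam

lemma pw_ne_zero {b z : ℂ} (hz : ‖z‖ < 1) (hzb : z ≠ b) (lam : ℝ) :
    pw lam b z ≠ 0 := by
  intro h0
  have := pw_abs_sq hz hzb lam
  rw [h0] at this
  simp at this
  have h1 : ‖z - b‖ > 0 := norm_pos_iff.mpr (sub_ne_zero.2 hzb)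
  have h2 : (0:ℝ) < (1 - ‖z‖ ^ 2) / ‖z - b‖ ^ 2 :=
    div_pos (by nlinarith [norm_nonneg z]) (by positivity)
  linarith

lemma pw_g {e w b z : ℂ} (he : ‖e‖ = 1) (hw : ‖w‖ < 1)
    (hz : ‖z‖ < 1) (hbd : 1 - conj' w * b ≠ 0) (hzb : z ≠ b) (lam : ℝ) :
    pw lam (e * phi w b) (e * phi w z)
      = pw lam b z * (((normSq (1 - conj' w * b) / (1 - normSq w) : ℝ) : ℂ)
          ^ ((1 + Complex.I * (lam : ℂ)) / 2)) := by
  have hbas : (0:ℝ) ≤ (1 - ‖z‖ ^ 2) / ‖z - b‖ ^ 2 := by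
    apply div_nonneg (by nlinarith [norm_nonneg z])
    positivity
  have hc : (0:ℝ) ≤ normSq (1 - conj' w * b) / (1 - normSq w) :=
    le_of_lt (div_pos (Complex.normSq_pos.2 hbd) (one_sub_normSq_pos hw))
  rw [pw, pw, bas_g he hw hz hbd hzb, Complex.ofReal_mul,
    mul_cpow_ofReal_nonneg hbas hc]

lemma cpow_pair {c : ℝ} (hc : 0 < c) (lam : ℝ) :
    ((c : ℝ) : ℂ) ^ ((1 + Complex.I * (lam : ℂ)) / 2)
      * ((c : ℝ) : ℂ) ^ ((1 + Complex.I * (((-lam : ℝ) : ℝ) : ℂ)) / 2) = (c : ℂ) := by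
  rw [← Complex.cpow_add _ _ (by exact_mod_cast hc.ne')]
  rw [show (1 + Complex.I * (lam : ℂ)) / 2 + (1 + Complex.I * (((-lam : ℝ) : ℝ) : ℂ)) / 2
      = 1 by push_cast; ring]
  exact Complex.cpow_one _

lemma isOpen_disc : IsOpen Disc := isOpen_lt (by continuity) continuous_const

lemma measurableSet_disc : MeasurableSet Disc := isOpen_disc.measurableSet

/-- densities -/

noncomputable def dens (z : ℂ) : ℝ := (1 - ‖z‖ ^ 2)⁻¹ ^ 2

lemma dens_meas : Measurable fun z : ℂ => (dens z).toNNReal := by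
  apply Measurable.real_toNNReal
  have m1 : Measurable fun z : ℂ => 1 - ‖z‖ ^ 2 :=
    (continuous_const.sub (continuous_norm.pow 2)).measurable
  exact (m1.inv).pow_const 2

lemma dens_nonneg (z : ℂ) : 0 ≤ dens z := by unfold dens; positivity

lemma hyp_eq : hypMeasure
    = (volume.restrict Disc).withDensity fun z => ((dens z).toNNReal : ℝ≥0∞) := by
  unfold hypMeasure dens
  congr 1

lemma hyp_integral (h : ℂ → ℂ) :
    ∫ z, h z ∂hypMeasure = ∫ z in Disc, dens z • h z := by
  rw [hyp_eq, integral_withDensity_eq_integral_smul dens_meas]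
  apply integral_congr_ae
  filter_upwards with z
  rw [NNReal.smul_def, Real.coe_toNNReal _ (dens_nonneg z)]

lemma ae_disc : ∀ᵐ z ∂hypMeasure, z ∈ Disc := by
  rw [hyp_eq]
  exact (withDensity_absolutelyContinuous _ _).ae_le (ae_restrict_mem measurableSet_disc)

/-- determinant of real-linear map given by complex multiplication -/

lemma det_cmul (c : ℂ) :
    (((c • (1 : ℂ →L[ℂ] ℂ)) : ℂ →L[ℂ] ℂ).restrictScalars ℝ).det = normSq c := by
  have h1 : (((c • (1 : ℂ →L[ℂ] ℂ)) : ℂ →L[ℂ] ℂ).restrictScalars ℝ).toLinearMap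
      = Algebra.lmul ℝ ℂ c := by
    apply LinearMap.ext
    intro z
    simp [mul_comm]
  rw [ContinuousLinearMap.det, h1]
  rw [← Algebra.norm_apply, Algebra.norm_complex_apply]

section gmap

variable {e w : ℂ}

/-- the automorphism -/

noncomputable def gma (e w z : ℂ) : ℂ := e * phi w z

lemma gma_mem (he : ‖e‖ = 1) (hw : ‖w‖ < 1) {z : ℂ}
    (hz : ‖z‖ < 1) : ‖gma e w z‖ < 1 := by
  rw [gma, norm_mul, he, one_mul]; exact phi_mem hw hz

lemma gma_inv (he : ‖e‖ = 1) (hw : ‖w‖ < 1) {z : ℂ}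
    (hz : ‖z‖ < 1) : phi w (conj' e * gma e w z) = z := by
  rw [gma, ← mul_assoc, unit_conj_mul he, one_mul]
  exact phi_invol hw hz.le

lemma gma_image (he : ‖e‖ = 1) (hw : ‖w‖ < 1) :
    gma e w '' Disc = Disc := by
  apply Set.Subset.antisymm
  · rintro _ ⟨z, hz, rfl⟩
    exact gma_mem he hw hz
  · intro u hu
    have h1 : ‖conj' e * u‖ < 1 := by
      rw [norm_mul, Complex.norm_conj, he, one_mul]; exact hu
    refine ⟨phi w (conj' e * u), phi_mem hw h1, ?_⟩
    rw [gma, phi_invol hw h1.le, ← mul_assoc]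
    have : e * conj' e = 1 := by rw [mul_comm]; exact unit_conj_mul he
    rw [this, one_mul]

lemma gma_injOn (he : ‖e‖ = 1) (hw : ‖w‖ < 1) :
    Set.InjOn (gma e w) Disc := by
  intro z hz z' hz' h
  rw [gma, gma] at h
  have he0 : e ≠ 0 := by intro h0; rw [h0] at he; simp at he
  exact phi_inj hw (le_of_lt hz) (le_of_lt hz') (mul_left_cancel₀ he0 h)

/-- complex derivative of gma -/

noncomputable def gder (e w z : ℂ) : ℂ := e * ((conj' w * w - 1) / (1 - conj' w * z) ^ 2)

lemma gma_hasDeriv (hw : ‖w‖ < 1) {z : ℂ} (hz : ‖z‖ < 1) :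
    HasDerivAt (gma e w) (gder e w z) z := by
  have hd : 1 - conj' w * z ≠ 0 := denom_ne hw hz.le
  have h1 : HasDerivAt (fun z : ℂ => w - z) (-1) z := by
    simpa using (hasDerivAt_id z).const_sub w
  have h2 : HasDerivAt (fun z : ℂ => 1 - conj' w * z) (-(conj' w)) z := by
    simpa using ((hasDerivAt_id z).const_mul (conj' w)).const_sub 1
  have h3 : HasDerivAt (fun z : ℂ => (w - z) / (1 - conj' w * z))
      (((-1) * (1 - conj' w * z) - (w - z) * (-(conj' w))) / (1 - conj' w * z) ^ 2) z :=
    h1.div h2 hd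
  have h4 := h3.const_mul e
  have hfun : gma e w = fun y => e * ((w - y) / (1 - conj' w * y)) := by
    funext u; rw [gma, phi]
  rw [hfun]
  refine h4.congr_deriv ?_
  rw [gder]
  field_simp
  ring_nf

lemma gma_fderiv (hw : ‖w‖ < 1) {z : ℂ} (hz : ‖z‖ < 1) :
    HasFDerivWithinAt (gma e w)
      (((gder e w z • (1 : ℂ →L[ℂ] ℂ)) : ℂ →L[ℂ] ℂ).restrictScalars ℝ) Disc z := by
  have h := (gma_hasDeriv hw hz (e := e)).hasFDerivAt
  have h2 : ContinuousLinearMap.toSpanSingleton ℂ (gder e w z)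
      = (gder e w z • (1 : ℂ →L[ℂ] ℂ)) := by
    ext
    simp [mul_comm]
  rw [h2] at h
  exact (h.restrictScalars ℝ).hasFDerivWithinAt

end gmap

section inv

variable {e w : ℂ}

lemma dens_id (he : ‖e‖ = 1) (hw : ‖w‖ < 1) {z : ℂ}
    (hz : ‖z‖ < 1) :
    |normSq (gder e w z)| * dens (gma e w z) = dens z := by
  have hd : 1 - conj' w * z ≠ 0 := denom_ne hw hz.le
  have hN : normSq (1 - conj' w * z) ≠ 0 := by simpa [Complex.normSq_eq_zero] using hd
  have hNpos : 0 < normSq (1 - conj' w * z) := lt_of_le_of_ne (normSq_nonneg _) (Ne.symm hN)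
  have hW : 0 < 1 - normSq w := by have := normSq_lt_one hw; linarith
  have hZ : 0 < 1 - normSq z := by have := normSq_lt_one hz; linarith
  have h1 : normSq (gder e w z)
      = (1 - normSq w) ^ 2 / normSq (1 - conj' w * z) ^ 2 := by
    rw [gder, Complex.normSq_mul, show normSq e = 1 by rw [← Complex.sq_norm, he]; norm_num,
      one_mul, Complex.normSq_div, map_pow]
    congr 1
    rw [show conj' w * w - 1 = -((1:ℂ) - conj' w * w) by ring, Complex.normSq_neg,
      show (1:ℂ) - conj' w * w = ((1 - normSq w : ℝ) : ℂ) by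
        rw [Complex.ofReal_sub, Complex.ofReal_one, Complex.normSq_eq_conj_mul_self],
      Complex.normSq_ofReal]
    ring
  have h2 : 1 - ‖gma e w z‖ ^ 2
      = (1 - normSq w) * (1 - normSq z) / normSq (1 - conj' w * z) := by
    rw [gma, Complex.sq_norm, Complex.normSq_mul,
      show normSq e = 1 by rw [← Complex.sq_norm, he]; norm_num, one_mul, phi,
      Complex.normSq_div]
    have := key0 w z
    rw [eq_div_iff hN, sub_mul, div_mul_cancel₀ _ hN]
    linarith
  rw [dens, dens, h2, h1, _root_.abs_of_nonneg (by positivity)]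
  rw [show 1 - ‖z‖ ^ 2 = 1 - normSq z by rw [Complex.sq_norm]]
  field_simp

lemma hyp_inv (he : ‖e‖ = 1) (hw : ‖w‖ < 1) (h : ℂ → ℂ) :
    ∫ z, h (gma e w z) ∂hypMeasure = ∫ z, h z ∂hypMeasure := by
  rw [hyp_integral, hyp_integral]
  have hder : ∀ z ∈ Disc, HasFDerivWithinAt (gma e w)
      (((gder e w z • (1 : ℂ →L[ℂ] ℂ)) : ℂ →L[ℂ] ℂ).restrictScalars ℝ) Disc z :=
    fun z hz => gma_fderiv hw hz
  have key := integral_image_eq_integral_abs_det_fderiv_smul volume measurableSet_disc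
    hder (gma_injOn he hw) (fun x => dens x • h x)
  rw [gma_image he hw] at key
  rw [key]
  apply setIntegral_congr_fun measurableSet_disc
  intro z hz
  simp only
  rw [det_cmul, smul_smul, dens_id he hw hz]

end inv

lemma hyp_withDensity : hypMeasure
    = (volume.restrict Disc).withDensity fun z => ENNReal.ofReal (dens z) := rfl

lemma compact_bound {K : Set ℂ} (hK : IsCompact K) (hKD : K ⊆ Disc) :
    ∃ ρ : ℝ, 0 ≤ ρ ∧ ρ < 1 ∧ ∀ z ∈ K, ‖z‖ ≤ ρ := by
  rcases K.eq_empty_or_nonempty with h | h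
  · exact ⟨0, le_refl _, one_pos, by simp [h]⟩
  · obtain ⟨z0, hz0K, hz0⟩ := hK.exists_isMaxOn h continuous_norm.continuousOn
    exact ⟨‖z0‖, norm_nonneg z0, hKD hz0K, fun z hz => hz0 hz⟩

lemma hyp_fin {K : Set ℂ} (hK : IsCompact K) (hKD : K ⊆ Disc) : hypMeasure K < ⊤ := by
  obtain ⟨ρ, hρ0, hρ1, hρ⟩ := compact_bound hK hKD
  rw [hyp_withDensity, withDensity_apply _ hK.measurableSet]
  have hbound : ∀ z ∈ K, ENNReal.ofReal (dens z) ≤ ENNReal.ofReal ((1 - ρ ^ 2)⁻¹ ^ 2) := by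
    intro z hz
    apply ENNReal.ofReal_le_ofReal
    have h1 : 0 < 1 - ρ ^ 2 := by nlinarith
    have h2 : 1 - ρ ^ 2 ≤ 1 - ‖z‖ ^ 2 := by
      have := hρ z hz; nlinarith [norm_nonneg z]
    rw [dens]
    have h3 : (1 - ‖z‖ ^ 2)⁻¹ ≤ (1 - ρ ^ 2)⁻¹ := by
      apply inv_anti₀ h1 h2
    have h4 : 0 ≤ (1 - ‖z‖ ^ 2)⁻¹ := by
      have : 0 < 1 - ‖z‖ ^ 2 := lt_of_lt_of_le h1 h2
      positivity
    nlinarith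
  calc ∫⁻ z in K, ENNReal.ofReal (dens z) ∂(volume.restrict Disc)
      ≤ ∫⁻ _ in K, ENNReal.ofReal ((1 - ρ ^ 2)⁻¹ ^ 2) ∂(volume.restrict Disc) :=
        setLIntegral_mono' hK.measurableSet hbound
    _ = ENNReal.ofReal ((1 - ρ ^ 2)⁻¹ ^ 2) * (volume.restrict Disc) K := by
        rw [setLIntegral_const]
    _ < ⊤ := by
        apply ENNReal.mul_lt_top ENNReal.ofReal_lt_top
        rw [Measure.restrict_apply hK.measurableSet]
        exact lt_of_le_of_lt (measure_mono Set.inter_subset_left) hK.measure_lt_top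

lemma restrict_le_hyp : volume.restrict Disc ≤ hypMeasure := by
  rw [hyp_withDensity]
  nth_rewrite 1 [← withDensity_one (μ := volume.restrict Disc)]
  apply withDensity_mono
  filter_upwards [ae_restrict_mem measurableSet_disc] with z hz
  have h1 : 0 < 1 - ‖z‖ ^ 2 := by
    have : ‖z‖ < 1 := hz
    nlinarith [norm_nonneg z]
  have h2 : (1:ℝ) ≤ dens z := by
    rw [dens]
    have : 1 - ‖z‖ ^ 2 ≤ 1 := by nlinarith [norm_nonneg z]
    nlinarith [one_le_inv_iff₀.2 ⟨h1, this⟩]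
  calc (1 : ℝ≥0∞) = ENNReal.ofReal 1 := by simp
    _ ≤ ENNReal.ofReal (dens z) := ENNReal.ofReal_le_ofReal h2

lemma hyp_ball_pos {x0 : ℂ} {r : ℝ} (hr : 0 < r) (hb : ball x0 r ⊆ Disc) :
    0 < hypMeasure (ball x0 r) := by
  have h1 : (volume.restrict Disc) (ball x0 r) ≤ hypMeasure (ball x0 r) :=
    restrict_le_hyp _
  have h2 : (volume.restrict Disc) (ball x0 r) = volume (ball x0 r) := by
    rw [Measure.restrict_apply measurableSet_ball, Set.inter_eq_self_of_subset_left hb]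
  rw [h2] at h1
  exact lt_of_lt_of_le (measure_ball_pos volume x0 hr) h1

lemma integrable_of_supp {u : ℂ → ℂ} (hu : Continuous u) (hcs : HasCompactSupport u)
    (hsupp : tsupport u ⊆ Disc) : Integrable u hypMeasure := by
  rw [← integrableOn_iff_integrable_of_support_subset (subset_tsupport u)]
  have hfin : IsFiniteMeasure (hypMeasure.restrict (tsupport u)) := by
    constructor
    rw [Measure.restrict_apply_univ]
    exact hyp_fin hcs hsupp
  obtain ⟨C, hC⟩ := hu.bounded_above_of_compact_support hcs
  exact Integrable.mono' (integrable_const C) hu.aestronglyMeasurable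
    (Filter.Eventually.of_forall hC)

lemma integrable_of_supp_real {u : ℂ → ℝ} (hu : Continuous u) (hcs : HasCompactSupport u)
    (hsupp : tsupport u ⊆ Disc) : Integrable u hypMeasure := by
  rw [← integrableOn_iff_integrable_of_support_subset (subset_tsupport u)]
  have hfin : IsFiniteMeasure (hypMeasure.restrict (tsupport u)) := by
    constructor
    rw [Measure.restrict_apply_univ]
    exact hyp_fin hcs hsupp
  obtain ⟨C, hC⟩ := hu.bounded_above_of_compact_support hcs
  exact Integrable.mono' (integrable_const C) hu.aestronglyMeasurable
    (Filter.Eventually.of_forall hC)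

lemma cont_mul_of_supp {f : ℂ → ℂ} {K : ℂ → ℝ} (hf : Continuous f) (hK : ContinuousOn K Disc)
    (hsupp : tsupport f ⊆ Disc) : Continuous fun z => f z * (K z : ℂ) := by
  rw [continuous_iff_continuousAt]
  intro z
  by_cases hz : z ∈ Disc
  · exact hf.continuousAt.mul
      (Complex.continuous_ofReal.continuousAt.comp (hK.continuousAt (isOpen_disc.mem_nhds hz)))
  · have hz' : z ∈ (tsupport f)ᶜ := fun hc => hz (hsupp hc)
    have hopen : IsOpen (tsupport f)ᶜ := (isClosed_tsupport f).isOpen_compl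
    have heq : (fun z => f z * (K z : ℂ)) =ᶠ[nhds z] fun _ => 0 := by
      filter_upwards [hopen.mem_nhds hz'] with u hu
      simp [image_eq_zero_of_notMem_tsupport hu]
    exact ContinuousAt.congr continuousAt_const heq.symm

lemma density_aux (K1 K2 : ℂ → ℝ) (h1 : ContinuousOn K1 Disc) (h2 : ContinuousOn K2 Disc)
    (h : ∀ f : ℂ → ℂ, Continuous f → HasCompactSupport f → tsupport f ⊆ Disc →
      ∫ ξ, f ξ * (K1 ξ : ℂ) ∂hypMeasure = ∫ ξ, f ξ * (K2 ξ : ℂ) ∂hypMeasure)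
    {x0 : ℂ} (hx0 : x0 ∈ Disc) : ¬ K2 x0 < K1 x0 := by
  intro hlt
  set δ := K1 x0 - K2 x0 with hδ
  have hδpos : 0 < δ := by simp [hδ]; linarith
  have hD : ContinuousAt (fun z => K1 z - K2 z) x0 :=
    ((h1.sub h2).continuousAt (isOpen_disc.mem_nhds hx0))
  have h3 : ∀ᶠ z in nhds x0, δ / 2 < K1 z - K2 z :=
    hD.eventually (lt_mem_nhds (show δ / 2 < K1 x0 - K2 x0 by rw [← hδ]; linarith))
  have h4 : ∀ᶠ z in nhds x0, z ∈ Disc := isOpen_disc.mem_nhds hx0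
  obtain ⟨r, hr0, hball⟩ := Metric.eventually_nhds_iff_ball.1 (h3.and h4)
  set bump : ContDiffBump x0 := ⟨r / 4, r / 2, by linarith, by linarith⟩ with hbump
  set f : ℂ → ℂ := fun z => ((bump z : ℝ) : ℂ) with hf
  have hsupb : tsupport (fun z => (bump z : ℝ)) = closedBall x0 (r / 2) := bump.tsupport_eq
  have hsupf : tsupport f ⊆ closedBall x0 (r / 2) := by
    rw [← hsupb]
    apply closure_mono
    intro z hz
    rw [Function.mem_support] at hz ⊢
    intro h0
    exact hz (by rw [hf]; simp [h0])
  have hsubD : closedBall x0 (r / 2) ⊆ Disc := by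
    intro z hz
    have hzb : z ∈ ball x0 r := by
      rw [mem_ball]
      exact lt_of_le_of_lt (mem_closedBall.1 hz) (by linarith)
    exact (hball _ hzb).2
  have hfc : Continuous f := Complex.continuous_ofReal.comp bump.continuous
  have hfcs : HasCompactSupport f :=
    bump.hasCompactSupport.comp_left (g := fun t : ℝ => (t : ℂ)) Complex.ofReal_zero
  have hfsupp : tsupport f ⊆ Disc := hsupf.trans hsubD
  have heq := h f hfc hfcs hfsupp
  -- the real integrand
  set φ : ℂ → ℝ := fun z => bump z * (K1 z - K2 z) with hφ
  have hu1 : Integrable (fun z => f z * (K1 z : ℂ)) hypMeasure := by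
    apply integrable_of_supp (cont_mul_of_supp hfc h1 hfsupp) (hfcs.mul_right)
    exact (closure_mono (Function.support_mul_subset_left _ _)).trans hfsupp
  have hu2 : Integrable (fun z => f z * (K2 z : ℂ)) hypMeasure := by
    apply integrable_of_supp (cont_mul_of_supp hfc h2 hfsupp) (hfcs.mul_right)
    exact (closure_mono (Function.support_mul_subset_left _ _)).trans hfsupp
  have hzero : ∫ z, ((φ z : ℝ) : ℂ) ∂hypMeasure = 0 := by
    have : (fun z => ((φ z : ℝ) : ℂ))
        = fun z => f z * (K1 z : ℂ) - f z * (K2 z : ℂ) := by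
      funext z
      have e1 : φ z = bump z * (K1 z - K2 z) := rfl
      have e2 : f z = ((bump z : ℝ) : ℂ) := rfl
      rw [e1, e2]
      push_cast
      ring
    rw [this, integral_sub hu1 hu2, heq, sub_self]
  have hzero' : ∫ z, φ z ∂hypMeasure = 0 := by
    have h7 : ∫ z, ((φ z : ℝ) : ℂ) ∂hypMeasure = ((∫ z, φ z ∂hypMeasure : ℝ) : ℂ) :=
      integral_ofReal (𝕜 := ℂ) (f := φ) (μ := hypMeasure)
    rw [hzero] at h7
    exact Complex.ofReal_eq_zero.1 h7.symm
  -- continuity of φ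
  have hφc : Continuous φ := by
    rw [continuous_iff_continuousAt]
    intro z
    by_cases hz : z ∈ Disc
    · exact bump.continuous.continuousAt.mul ((h1.sub h2).continuousAt (isOpen_disc.mem_nhds hz))
    · have hz' : z ∈ (tsupport fun z => (bump z : ℝ))ᶜ := by
        rw [hsupb]
        intro hc
        exact hz (hsubD hc)
      have hopen : IsOpen (tsupport fun z => (bump z : ℝ))ᶜ :=
        (isClosed_tsupport _).isOpen_compl
      have heq2 : φ =ᶠ[nhds z] fun _ => 0 := by
        filter_upwards [hopen.mem_nhds hz'] with u hu
        have e1 : φ u = bump u * (K1 u - K2 u) := rfl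
        rw [e1, image_eq_zero_of_notMem_tsupport hu, zero_mul]
      exact ContinuousAt.congr continuousAt_const heq2.symm
  have hφsupp : tsupport φ ⊆ Disc := by
    intro z hz
    apply hsubD
    rw [← hsupb]
    exact closure_mono (Function.support_mul_subset_left _ _) hz
  have hφcs : HasCompactSupport φ := bump.hasCompactSupport.mul_right
  have hφint : Integrable φ hypMeasure := integrable_of_supp_real hφc hφcs hφsupp
  -- nonnegativity
  have hφ0 : ∀ z, 0 ≤ φ z := by
    intro z
    have e1 : φ z = bump z * (K1 z - K2 z) := rfl
    by_cases hz : z ∈ Function.support fun z => (bump z : ℝ)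
    · have hzb : z ∈ ball x0 r := by
        have h6 := bump.support_eq ▸ hz
        have h7 : dist z x0 < bump.rOut := mem_ball.1 h6
        have h8 : bump.rOut = r / 2 := rfl
        rw [mem_ball]
        rw [h8] at h7
        linarith
      have h9 := (hball _ hzb).1
      have h10 := bump.nonneg (x := z)
      rw [e1]
      nlinarith
    · rw [Function.mem_support, not_not] at hz
      rw [e1, hz, zero_mul]
  -- lower bound on the small ball
  have hfin4 : hypMeasure (closedBall x0 (r / 4)) < ⊤ :=
    hyp_fin (isCompact_closedBall _ _) ((closedBall_subset_closedBall (by linarith)).trans hsubD)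
  have hpos4 : 0 < hypMeasure (closedBall x0 (r / 4)) := by
    apply lt_of_lt_of_le (hyp_ball_pos (show (0:ℝ) < r / 4 by linarith)
      ((ball_subset_closedBall.trans (closedBall_subset_closedBall (by linarith))).trans hsubD))
    exact measure_mono ball_subset_closedBall
  have hbound : ∀ z ∈ closedBall x0 (r / 4), δ / 2 ≤ φ z := by
    intro z hz
    have h1b : bump z = 1 := bump.one_of_mem_closedBall (by
      have h8 : bump.rIn = r / 4 := rfl
      rw [mem_closedBall, h8]
      exact mem_closedBall.1 hz)
    have hzb : z ∈ ball x0 r := by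
      rw [mem_ball]
      have := mem_closedBall.1 hz
      linarith
    have h9 := (hball _ hzb).1
    have e1 : φ z = bump z * (K1 z - K2 z) := rfl
    rw [e1, h1b, one_mul]
    linarith
  have hlow : (δ / 2) * (hypMeasure (closedBall x0 (r / 4))).toReal
      ≤ ∫ z in closedBall x0 (r / 4), φ z ∂hypMeasure := by
    have hconst : ∫ z in closedBall x0 (r / 4), (δ / 2) ∂hypMeasure
        = (δ / 2) * (hypMeasure (closedBall x0 (r / 4))).toReal := by
      rw [setIntegral_const, smul_eq_mul, mul_comm, measureReal_def]
    rw [← hconst]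
    apply setIntegral_mono_on
    · exact integrableOn_const hfin4.ne
    · exact hφint.integrableOn
    · exact measurableSet_closedBall
    · exact hbound
  have hup : ∫ z in closedBall x0 (r / 4), φ z ∂hypMeasure ≤ ∫ z, φ z ∂hypMeasure :=
    setIntegral_le_integral hφint (Filter.Eventually.of_forall hφ0)
  have : 0 < (δ / 2) * (hypMeasure (closedBall x0 (r / 4))).toReal := by
    apply mul_pos (by linarith)
    exact ENNReal.toReal_pos hpos4.ne' hfin4.ne
  linarith [hzero' ▸ (hlow.trans hup)]

lemma density_unique (K1 K2 : ℂ → ℝ) (h1 : ContinuousOn K1 Disc) (h2 : ContinuousOn K2 Disc)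
    (h : ∀ f : ℂ → ℂ, Continuous f → HasCompactSupport f → tsupport f ⊆ Disc →
      ∫ ξ, f ξ * (K1 ξ : ℂ) ∂hypMeasure = ∫ ξ, f ξ * (K2 ξ : ℂ) ∂hypMeasure)
    {x0 : ℂ} (hx0 : x0 ∈ Disc) : K1 x0 = K2 x0 := by
  have ha := density_aux K1 K2 h1 h2 h hx0
  have hb := density_aux K2 K1 h2 h1 (fun f hc hcs hsupp => (h f hc hcs hsupp).symm) hx0
  push_neg at ha hb
  linarith

section transport

variable {e w : ℂ}

lemma phi_contAt (hw : ‖w‖ < 1) {z : ℂ} (hz : ‖z‖ ≤ 1) :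
    ContinuousAt (phi w) z := by
  apply ContinuousAt.div
  · fun_prop
  · fun_prop
  · exact denom_ne hw hz

lemma gma_contAt {z : ℂ} (hd : 1 - conj' w * z ≠ 0) : ContinuousAt (gma e w) z := by
  have hfun : gma e w = fun u => e * ((w - u) / (1 - conj' w * u)) := by
    funext u; rw [gma, phi]
  rw [hfun]
  apply ContinuousAt.mul continuousAt_const
  apply ContinuousAt.div
  · fun_prop
  · fun_prop
  · exact hd

lemma gma_equiv_phi {x z : ℂ} (he : ‖e‖ = 1) (hw : ‖w‖ < 1)
    (hx : ‖x‖ < 1) (hz : ‖z‖ < 1) :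
    phi (gma e w x) (gma e w z)
      = (e * (-(1 - conj' x * w) / (1 - conj' w * x))) * phi x z := phi_g he hw hx hz

/-- transported test function -/

lemma transport (he : ‖e‖ = 1) (hw : ‖w‖ < 1) {f : ℂ → ℂ}
    (hfc : Continuous f) (hfcs : HasCompactSupport f) (hfsupp : tsupport f ⊆ Disc) :
    ∃ f' : ℂ → ℂ, Continuous f' ∧ HasCompactSupport f' ∧ tsupport f' ⊆ Disc ∧
      ∀ z ∈ Disc, f' z = f (gma e w z) := by
  set K : Set ℂ := (fun u => phi w (conj' e * u)) '' (tsupport f) with hK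
  have hKsubD : K ⊆ Disc := by
    rintro _ ⟨u, hu, rfl⟩
    have hu1 : ‖conj' e * u‖ < 1 := by
      rw [norm_mul, Complex.norm_conj, he, one_mul]
      exact hfsupp hu
    exact phi_mem hw hu1
  have hKcomp : IsCompact K := by
    apply IsCompact.image_of_continuousOn hfcs
    intro u hu
    have hu1 : ‖conj' e * u‖ ≤ 1 := by
      rw [norm_mul, Complex.norm_conj, he, one_mul]
      exact le_of_lt (hfsupp hu)
    exact ((phi_contAt hw hu1).comp (by fun_prop)).continuousWithinAt
  obtain ⟨ρ, hρ0, hρ1, hρ⟩ := compact_bound hKcomp hKsubD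
  set χ : ContDiffBump (0 : ℂ) := ⟨(1 + ρ) / 2, (3 + ρ) / 4, by linarith, by linarith⟩ with hχ
  have hrIn : χ.rIn = (1 + ρ) / 2 := rfl
  have hrOut : χ.rOut = (3 + ρ) / 4 := rfl
  set f' : ℂ → ℂ := fun z => ((χ z : ℝ) : ℂ) * f (gma e w z) with hf'
  have hχsupp : tsupport (fun z => (χ z : ℝ)) = closedBall 0 ((3 + ρ) / 4) := by
    rw [χ.tsupport_eq, hrOut]
  have hχsubD : closedBall (0:ℂ) ((3 + ρ) / 4) ⊆ Disc := by
    intro z hz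
    have : ‖z‖ ≤ (3 + ρ) / 4 := by
      have := mem_closedBall.1 hz
      rwa [Complex.dist_eq, sub_zero] at this
    show ‖z‖ < 1
    linarith
  refine ⟨f', ?_, ?_, ?_, ?_⟩
  · -- continuity
    rw [continuous_iff_continuousAt]
    intro z
    by_cases hd : 1 - conj' w * z ≠ 0
    · exact (Complex.continuous_ofReal.comp χ.continuous).continuousAt.mul
        (hfc.continuousAt.comp (gma_contAt hd))
    · push_neg at hd
      have hzout : z ∉ closedBall (0:ℂ) ((3 + ρ) / 4) := by
        intro hzin
        have h1 : ‖z‖ < 1 := hχsubD hzin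
        have h2 : ‖conj' w * z‖ < 1 := by
          rw [norm_mul, Complex.norm_conj]
          nlinarith [norm_nonneg w, norm_nonneg z]
        exact denom_ne hw h1.le hd
      have hopen : IsOpen (closedBall (0:ℂ) ((3 + ρ) / 4))ᶜ := isClosed_closedBall.isOpen_compl
      have heq0 : f' =ᶠ[nhds z] fun _ => 0 := by
        filter_upwards [hopen.mem_nhds hzout] with u hu
        have hu' : u ∉ tsupport fun z => (χ z : ℝ) := by rw [hχsupp]; exact hu
        have : (χ u : ℝ) = 0 := image_eq_zero_of_notMem_tsupport hu'
        show ((χ u : ℝ) : ℂ) * f (gma e w u) = 0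
        rw [this]; simp
      exact ContinuousAt.congr continuousAt_const heq0.symm
  · -- compact support
    apply HasCompactSupport.intro (isCompact_closedBall (0:ℂ) ((3 + ρ) / 4))
    intro z hz
    have hu' : z ∉ tsupport fun z => (χ z : ℝ) := by rw [hχsupp]; exact hz
    have : (χ z : ℝ) = 0 := image_eq_zero_of_notMem_tsupport hu'
    show ((χ z : ℝ) : ℂ) * f (gma e w z) = 0
    rw [this]; simp
  · -- support in Disc
    intro z hz
    apply hχsubD
    rw [← hχsupp]
    revert hz
    apply closure_mono
    intro u hu
    rw [Function.mem_support] at hu ⊢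
    intro h0
    apply hu
    show ((χ u : ℝ) : ℂ) * f (gma e w u) = 0
    rw [h0]; simp
  · -- equals f ∘ g on Disc
    intro z hz
    have hzD : ‖z‖ < 1 := hz
    by_cases hgz : gma e w z ∈ tsupport f
    · have hzK : z ∈ K := ⟨gma e w z, hgz, gma_inv he hw hzD⟩
      have hzρ : ‖z‖ ≤ ρ := hρ z hzK
      have h1 : χ z = 1 := by
        apply χ.one_of_mem_closedBall
        rw [mem_closedBall, Complex.dist_eq, sub_zero, hrIn]
        linarith
      show ((χ z : ℝ) : ℂ) * f (gma e w z) = f (gma e w z)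
      rw [h1]; simp
    · have h0 : f (gma e w z) = 0 := image_eq_zero_of_notMem_tsupport hgz
      show ((χ z : ℝ) : ℂ) * f (gma e w z) = f (gma e w z)
      rw [h0, mul_zero]

end transport

section jinv

variable {e w : ℂ}

lemma M_equiv (M : ℂ → ℂ → ℂ)
    (hM : ∀ x ∈ Disc, ∀ y ∈ Disc, M x y ∈ Disc ∧ phi (M x y) x = -(phi (M x y) y))
    (he : ‖e‖ = 1) (hw : ‖w‖ < 1) {z y : ℂ}
    (hz : z ∈ Disc) (hy : y ∈ Disc) :
    M (gma e w z) (gma e w y) = gma e w (M z y) := by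
  have hzD : ‖z‖ < 1 := hz
  have hyD : ‖y‖ < 1 := hy
  have hgz := gma_mem he hw hzD
  have hgy := gma_mem he hw hyD
  obtain ⟨hm1, hm2⟩ := hM _ hgz _ hgy
  obtain ⟨hn1, hn2⟩ := hM z hz y hy
  have hn1D : ‖M z y‖ < 1 := hn1
  apply mid_unique hgz hgy hm1 (gma_mem he hw hn1D) hm2
  rw [gma, gma, gma, phi_g he hw hn1D hzD, phi_g he hw hn1D hyD, hn2]
  ring

lemma J_inv (M : ℂ → ℂ → ℂ)
    (hM : ∀ x ∈ Disc, ∀ y ∈ Disc, M x y ∈ Disc ∧ phi (M x y) x = -(phi (M x y) y))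
    (J : ℂ → ℂ → ℝ) (hJc : Continuous fun p : ℂ × ℂ => J p.1 p.2)
    (hJ : ∀ y ∈ Disc, ∀ f : ℂ → ℂ, Continuous f → HasCompactSupport f → tsupport f ⊆ Disc →
      ∫ z, f (M z y) ∂hypMeasure = ∫ x, f x * (J x y : ℂ) ∂hypMeasure)
    (he : ‖e‖ = 1) (hw : ‖w‖ < 1) {x y : ℂ}
    (hx : x ∈ Disc) (hy : y ∈ Disc) :
    J (gma e w x) (gma e w y) = J x y := by
  have hxD : ‖x‖ < 1 := hx
  have hyD : ‖y‖ < 1 := hy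
  have hgy : gma e w y ∈ Disc := gma_mem he hw hyD
  have hgx : gma e w x ∈ Disc := gma_mem he hw hxD
  -- the two densities
  have hK1 : ContinuousOn (fun ξ => J ξ (gma e w y)) Disc :=
    (hJc.comp (continuous_id.prodMk continuous_const)).continuousOn
  have hK2 : ContinuousOn (fun ξ => J (phi w (conj' e * ξ)) y) Disc := by
    intro ξ hξ
    have h1 : ‖conj' e * ξ‖ ≤ 1 := by
      rw [norm_mul, Complex.norm_conj, he, one_mul]
      exact le_of_lt hξ
    have h2 : ContinuousAt (fun u : ℂ => phi w (conj' e * u)) ξ :=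
      (phi_contAt hw h1).comp ((continuous_const.mul continuous_id).continuousAt)
    have h3 : ContinuousAt (fun u : ℂ => J (phi w (conj' e * u)) y) ξ :=
      hJc.continuousAt.comp (h2.prodMk continuousAt_const)
    exact h3.continuousWithinAt
  have main : ∀ f : ℂ → ℂ, Continuous f → HasCompactSupport f → tsupport f ⊆ Disc →
      ∫ ξ, f ξ * ((J ξ (gma e w y) : ℝ) : ℂ) ∂hypMeasure
        = ∫ ξ, f ξ * ((J (phi w (conj' e * ξ)) y : ℝ) : ℂ) ∂hypMeasure := by
    intro f hfc hfcs hfsupp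
    obtain ⟨f', hf'c, hf'cs, hf'supp, hf'eq⟩ := transport he hw hfc hfcs hfsupp
    calc ∫ ξ, f ξ * ((J ξ (gma e w y) : ℝ) : ℂ) ∂hypMeasure
        = ∫ z, f (M z (gma e w y)) ∂hypMeasure := (hJ _ hgy f hfc hfcs hfsupp).symm
      _ = ∫ z, f (M (gma e w z) (gma e w y)) ∂hypMeasure :=
          (hyp_inv he hw fun z => f (M z (gma e w y))).symm
      _ = ∫ z, f' (M z y) ∂hypMeasure := by
          apply integral_congr_ae
          filter_upwards [ae_disc] with z hz
          rw [M_equiv M hM he hw hz hy, hf'eq (M z y) (hM z hz y hy).1]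
      _ = ∫ ξ, f' ξ * ((J ξ y : ℝ) : ℂ) ∂hypMeasure := hJ _ hy f' hf'c hf'cs hf'supp
      _ = ∫ ξ, f (gma e w ξ) * ((J ξ y : ℝ) : ℂ) ∂hypMeasure := by
          apply integral_congr_ae
          filter_upwards [ae_disc] with ξ hξ
          rw [hf'eq ξ hξ]
      _ = ∫ ξ, f ξ * ((J (phi w (conj' e * ξ)) y : ℝ) : ℂ) ∂hypMeasure := by
          rw [← hyp_inv he hw (fun ξ => f ξ * ((J (phi w (conj' e * ξ)) y : ℝ) : ℂ))]
          apply integral_congr_ae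
          filter_upwards [ae_disc] with z hz
          show f (gma e w z) * ((J z y : ℝ) : ℂ)
              = f (gma e w z) * ((J (phi w (conj' e * gma e w z)) y : ℝ) : ℂ)
          rw [gma_inv he hw (show ‖z‖ < 1 from hz)]
  have := density_unique _ _ hK1 hK2 main hgx
  rwa [gma_inv he hw hxD] at this

end jinv

/-- Invariance of the Wigner transform: for every holomorphic automorphism
`g = e^{iα}·φ_w` of the disc, `W_{F∘g}(x; λ, b) = W_F(g(x); λ, g(b))`. -/
theorem stmt1 (M : ℂ → ℂ → ℂ)
    (hM : ∀ x ∈ Disc, ∀ y ∈ Disc, M x y ∈ Disc ∧ phi (M x y) x = -(phi (M x y) y))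
    (J : ℂ → ℂ → ℝ)
    (hJc : Continuous fun p : ℂ × ℂ => J p.1 p.2)
    (hJ0 : ∀ x y, 0 ≤ J x y)
    (hJ : ∀ y ∈ Disc, ∀ f : ℂ → ℂ, Continuous f → HasCompactSupport f → tsupport f ⊆ Disc →
      ∫ z, f (M z y) ∂hypMeasure = ∫ x, f x * (J x y : ℂ) ∂hypMeasure)
    (F : ℂ × ℂ → ℂ) (hFc : Continuous F) (hFcs : HasCompactSupport F)
    (hFsupp : tsupport F ⊆ Disc ×ˢ Disc)
    (α : ℝ) (w : ℂ) (hw : w ∈ Disc) (x : ℂ) (hx : x ∈ Disc) (lam : ℝ)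
    (b : ℂ) (hb : ‖b‖ = 1) :
    wigner J
        (fun p => F (Complex.exp (Complex.I * α) * phi w p.1,
                     Complex.exp (Complex.I * α) * phi w p.2)) x lam b
      = wigner J F (Complex.exp (Complex.I * α) * phi w x) lam
          (Complex.exp (Complex.I * α) * phi w b) := by
  set e : ℂ := Complex.exp (Complex.I * α) with he_def
  have he : ‖e‖ = 1 := by
    rw [he_def, Complex.norm_exp]
    simp
  have hwD : ‖w‖ < 1 := hw
  have hxD : ‖x‖ < 1 := hx
  have hbd : 1 - conj' w * b ≠ 0 := denom_ne hwD hb.le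
  set c : ℝ := normSq (1 - conj' w * b) / (1 - normSq w) with hc
  have hcpos : 0 < c := div_pos (Complex.normSq_pos.2 hbd) (by
    have := normSq_lt_one hwD; linarith)
  have hxb : x ≠ b := by
    intro h
    rw [h, hb] at hxD
    exact lt_irrefl 1 hxD
  -- replace notation
  have hgb : Complex.exp (Complex.I * α) * phi w b = gma e w b := rfl
  have hgx : Complex.exp (Complex.I * α) * phi w x = gma e w x := rfl
  rw [hgb, hgx]
  -- prefactor
  have hpre : ‖pw lam (gma e w b) (gma e w x)‖ ^ 2
      = ‖pw lam b x‖ ^ 2 * c := by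
    rw [show gma e w b = e * phi w b from rfl, show gma e w x = e * phi w x from rfl,
      pw_g he hwD hxD hbd hxb lam, norm_mul, mul_pow, cpow_half_abs_sq hcpos lam, hc]
  -- integrand transformation
  have hint : (∫ y, pw lam (gma e w b) y * pw (-lam) (gma e w b) (geoSym (gma e w x) y)
        * F (geoSym (gma e w x) y, y) * ((J (gma e w x) y : ℝ) : ℂ) ∂hypMeasure)
      = ((c : ℝ) : ℂ) * ∫ y, pw lam b y * pw (-lam) b (geoSym x y)
        * F (gma e w (geoSym x y), gma e w y) * ((J x y : ℝ) : ℂ) ∂hypMeasure := by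
    rw [← hyp_inv he hwD (fun y => pw lam (gma e w b) y
      * pw (-lam) (gma e w b) (geoSym (gma e w x) y)
      * F (geoSym (gma e w x) y, y) * ((J (gma e w x) y : ℝ) : ℂ))]
    rw [show ((c : ℝ) : ℂ) * (∫ y, pw lam b y * pw (-lam) b (geoSym x y)
        * F (gma e w (geoSym x y), gma e w y) * ((J x y : ℝ) : ℂ) ∂hypMeasure)
      = ∫ y, ((c : ℝ) : ℂ) • (pw lam b y * pw (-lam) b (geoSym x y)
        * F (gma e w (geoSym x y), gma e w y) * ((J x y : ℝ) : ℂ)) ∂hypMeasure by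
      rw [integral_smul, smul_eq_mul]]
    apply integral_congr_ae
    filter_upwards [ae_disc] with y hy
    have hyD : ‖y‖ < 1 := hy
    have hyb : y ≠ b := by
      intro h; rw [h, hb] at hyD; exact lt_irrefl 1 hyD
    have hsD : ‖geoSym x y‖ < 1 := geoSym_mem hxD hyD
    have hsb : geoSym x y ≠ b := by
      intro h; rw [h, hb] at hsD; exact lt_irrefl 1 hsD
    show pw lam (gma e w b) (gma e w y)
        * pw (-lam) (gma e w b) (geoSym (gma e w x) (gma e w y))
        * F (geoSym (gma e w x) (gma e w y), gma e w y) * ((J (gma e w x) (gma e w y) : ℝ) : ℂ)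
      = ((c : ℝ) : ℂ) • (pw lam b y * pw (-lam) b (geoSym x y)
        * F (gma e w (geoSym x y), gma e w y) * ((J x y : ℝ) : ℂ))
    have e1 : pw lam (gma e w b) (gma e w y)
        = pw lam b y * (((c : ℝ) : ℂ) ^ ((1 + Complex.I * (lam : ℂ)) / 2)) := by
      rw [show gma e w b = e * phi w b from rfl, show gma e w y = e * phi w y from rfl,
        pw_g he hwD hyD hbd hyb lam, hc]
    have e2 : geoSym (gma e w x) (gma e w y) = gma e w (geoSym x y) := by
      rw [show gma e w x = e * phi w x from rfl, show gma e w y = e * phi w y from rfl,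
        geoSym_g he hwD hxD hyD]
      rfl
    have e3 : pw (-lam) (gma e w b) (gma e w (geoSym x y))
        = pw (-lam) b (geoSym x y)
            * (((c : ℝ) : ℂ) ^ ((1 + Complex.I * ((((-lam : ℝ)) : ℝ) : ℂ)) / 2)) := by
      rw [show gma e w b = e * phi w b from rfl,
        show gma e w (geoSym x y) = e * phi w (geoSym x y) from rfl,
        pw_g he hwD hsD hbd hsb (-lam), hc]
    have e4 : J (gma e w x) (gma e w y) = J x y := J_inv M hM J hJc hJ he hwD hx hy
    rw [e2, e1, e3, e4, smul_eq_mul]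
    rw [show pw lam b y * ((c:ℝ):ℂ) ^ ((1 + Complex.I * (lam : ℂ)) / 2)
        * (pw (-lam) b (geoSym x y)
          * ((c:ℝ):ℂ) ^ ((1 + Complex.I * ((((-lam : ℝ)) : ℝ) : ℂ)) / 2))
        * F (gma e w (geoSym x y), gma e w y) * ((J x y : ℝ) : ℂ)
      = (((c:ℝ):ℂ) ^ ((1 + Complex.I * (lam : ℂ)) / 2)
          * ((c:ℝ):ℂ) ^ ((1 + Complex.I * ((((-lam : ℝ)) : ℝ) : ℂ)) / 2))
        * (pw lam b y * pw (-lam) b (geoSym x y)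
          * F (gma e w (geoSym x y), gma e w y) * ((J x y : ℝ) : ℂ)) by ring]
    rw [cpow_pair hcpos lam]
  -- put everything together
  rw [wigner, wigner, hpre, hint]
  have hp : ‖pw lam b x‖ ^ 2 ≠ 0 := by
    have := pw_ne_zero hxD hxb lam
    simpa using this
  have hpc : ((‖pw lam b x‖ ^ 2 : ℝ) : ℂ) ≠ 0 := by exact_mod_cast hp
  have hcc : ((c : ℝ) : ℂ) ≠ 0 := by exact_mod_cast hcpos.ne'
  rw [Complex.ofReal_mul, mul_inv]
  rw [show (((‖pw lam b x‖ ^ 2 : ℝ) : ℂ))⁻¹ * (((c:ℝ):ℂ))⁻¹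
      * (((c:ℝ):ℂ) * ∫ y, pw lam b y * pw (-lam) b (geoSym x y)
        * F (gma e w (geoSym x y), gma e w y) * ((J x y : ℝ) : ℂ) ∂hypMeasure)
    = (((‖pw lam b x‖ ^ 2 : ℝ) : ℂ))⁻¹ * ((((c:ℝ):ℂ))⁻¹ * ((c:ℝ):ℂ))
      * ∫ y, pw lam b y * pw (-lam) b (geoSym x y)
        * F (gma e w (geoSym x y), gma e w y) * ((J x y : ℝ) : ℂ) ∂hypMeasure by ring]
  rw [inv_mul_cancel₀ hcc, mul_one]
  rfl
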